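/- Let V be a ℚ-algebra, let M be a left V-module, and let π₀, π₁, …, πₙ be idempotents in V such that (πⱼ·πᵢ)·m = 0 for all m ∈ M whenever i ≠ j. For each i define pᵢ := (1 − ½πₙ)⋯(1 − ½π₍ᵢ₊₁₎) · πᵢ · (1 − ½π₍ᵢ₋₁₎)⋯(1 − ½π₀). Then pᵢ·m = πᵢ·m for all m ∈ M and all i; that is, each pᵢ and πᵢ induce the same endomorphism of M. -/
import Mathlib


/-- One step of the non-commutative Gram–Schmidt process:
`gs n π i = (1 − ½πₙ)⋯(1 − ½π₍ᵢ₊₁₎) · πᵢ · (1 − ½π₍ᵢ₋₁₎)⋯(1 − ½π₀)`,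
where the factors in each product are taken with decreasing index from left to right. -/
def gs {V : Type*} [Ring V] [Algebra ℚ V] (n : ℕ) (π : ℕ → V) (i : ℕ) : V :=
  (((List.range (n - i)).map (fun k => (1 : V) - ((2 : ℚ)⁻¹) • π (n - k))).prod)
    * π i *
  (((List.range i).map (fun k => (1 : V) - ((2 : ℚ)⁻¹) • π (i - 1 - k))).prod)

/-- Proposition `action1` of the paper: if all cross products `πⱼ·πᵢ` (`i ≠ j`) of the
idempotents `π₀, …, πₙ` act trivially on a left `V`-module `M`, then the elements produced
by one application of the non-commutative Gram–Schmidt process act on `M` exactly as the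
original idempotents. -/
theorem stmt_4 {V : Type*} [Ring V] [Algebra ℚ V]
    (M : Type*) [AddCommGroup M] [Module V M] (n : ℕ) (π : ℕ → V)
    (hidem : ∀ i, i ≤ n → π i * π i = π i)
    (hact : ∀ i j, i ≤ n → j ≤ n → i ≠ j → ∀ m : M, (π j * π i) • m = 0) :
    ∀ i, i ≤ n → ∀ m : M, gs n π i • m = π i • m := by
  intro i hi m
  have key : ∀ j, j ≤ n → j ≠ i → ∀ x : M,
      π i • (((1 : V) - ((2 : ℚ)⁻¹) • π j) • x) = π i • x := by
    intro j hj hne x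
    have h0 : (π i * π j) • x = 0 := hact j i hj hi hne x
    rw [← mul_smul, mul_sub, mul_one, mul_smul_comm, sub_smul, Algebra.smul_def, mul_smul,
      h0, smul_zero, sub_zero]
  have key2 : ∀ j, j ≤ n → j ≠ i → ∀ x : M,
      ((1 : V) - ((2 : ℚ)⁻¹) • π j) • (π i • x) = π i • x := by
    intro j hj hne x
    rw [sub_smul, one_smul, Algebra.smul_def, mul_smul, ← mul_smul (π j),
      hact i j hi hj (fun h => hne h.symm) x, smul_zero, sub_zero]
  have lemR : ∀ L : List ℕ, (∀ j ∈ L, j ≤ n ∧ j ≠ i) → ∀ x : M,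
      π i • ((L.map (fun j => (1 : V) - ((2 : ℚ)⁻¹) • π j)).prod • x) = π i • x := by
    intro L
    induction L with
    | nil => intro _ x; simp
    | cons j L ih =>
      intro h x
      rw [List.map_cons, List.prod_cons, mul_smul, key j (h j (by simp)).1 (h j (by simp)).2,
        ih (fun a ha => h a (by simp [ha])) x]
  have lemL : ∀ L : List ℕ, (∀ j ∈ L, j ≤ n ∧ j ≠ i) → ∀ x : M,
      (L.map (fun j => (1 : V) - ((2 : ℚ)⁻¹) • π j)).prod • (π i • x) = π i • x := by
    intro L
    induction L with
    | nil => intro _ x; simp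
    | cons j L ih =>
      intro h x
      rw [List.map_cons, List.prod_cons, mul_smul, ih (fun a ha => h a (by simp [ha])) x,
        key2 j (h j (by simp)).1 (h j (by simp)).2 x]
  have eR : ((List.range i).map (fun k => (1 : V) - ((2 : ℚ)⁻¹) • π (i - 1 - k))).prod
      = (((List.range i).map (fun k => i - 1 - k)).map
          (fun j => (1 : V) - ((2 : ℚ)⁻¹) • π j)).prod := by
    rw [List.map_map]; rfl
  have eL : ((List.range (n - i)).map (fun k => (1 : V) - ((2 : ℚ)⁻¹) • π (n - k))).prod
      = (((List.range (n - i)).map (fun k => n - k)).map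
          (fun j => (1 : V) - ((2 : ℚ)⁻¹) • π j)).prod := by
    rw [List.map_map]; rfl
  rw [gs, mul_smul, mul_smul, eR, eL,
    lemR _ (by
      intro j hj
      simp only [List.mem_map, List.mem_range] at hj
      obtain ⟨k, hk, rfl⟩ := hj
      omega) m,
    lemL _ (by
      intro j hj
      simp only [List.mem_map, List.mem_range] at hj
      obtain ⟨k, hk, rfl⟩ := hj
      omega) m]
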